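/- Let Δ be an n×n Hermitian complex matrix with eigenvalues η₁, …, ηₙ. Then for every n×n complex matrix Π such that both Π and I − Π are positive semidefinite, the real part of Tr(Π Δ) is at most Σᵢ max(ηᵢ, 0), and this bound is attained by the orthogonal projection onto the span of the eigenvectors of Δ with positive eigenvalues. -/

import Mathlib

open scoped ComplexOrder Matrix

lemma psd_diag_re_nonneg {n : ℕ} {Q : Matrix (Fin n) (Fin n) ℂ} (hQ : Q.PosSemidef)
    (i : Fin n) : 0 ≤ (Q i i).re := by
  have : (0 : ℂ) ≤ Q i i := hQ.diag_nonneg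
  exact (Complex.le_def.mp this).1

/-- For a Hermitian matrix `Δ` with eigenvalues `ηᵢ`, and any matrix `Π` with both `Π` and
`I − Π` positive semidefinite, `Re Tr(Π Δ) ≤ Σᵢ max(ηᵢ, 0)`; the bound is attained by the
orthogonal projection onto the span of the eigenvectors of `Δ` with positive eigenvalues. -/
theorem trace_posPart_bound {n : ℕ} (Δ : Matrix (Fin n) (Fin n) ℂ) (hΔ : Δ.IsHermitian) :
    (∀ Pm : Matrix (Fin n) (Fin n) ℂ, Pm.PosSemidef → (1 - Pm).PosSemidef →
      (Pm * Δ).trace.re ≤ ∑ i, max (hΔ.eigenvalues i) 0) ∧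
    (∀ Ppos : Matrix (Fin n) (Fin n) ℂ,
      Ppos = (hΔ.eigenvectorUnitary : Matrix (Fin n) (Fin n) ℂ) *
          Matrix.diagonal (fun i => if 0 < hΔ.eigenvalues i then (1 : ℂ) else 0) *
          (hΔ.eigenvectorUnitary : Matrix (Fin n) (Fin n) ℂ).conjTranspose →
      Ppos.PosSemidef ∧ (1 - Ppos).PosSemidef ∧
        (Ppos * Δ).trace.re = ∑ i, max (hΔ.eigenvalues i) 0) := by
  classical
  set U := (hΔ.eigenvectorUnitary : Matrix (Fin n) (Fin n) ℂ) with hUdef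
  have hUU : Uᴴ * U = 1 := by
    have := (Matrix.mem_unitaryGroup_iff').mp hΔ.eigenvectorUnitary.2
    simpa [Matrix.star_eq_conjTranspose] using this
  have hUU' : U * Uᴴ = 1 := by
    have := (Matrix.mem_unitaryGroup_iff).mp hΔ.eigenvectorUnitary.2
    simpa [Matrix.star_eq_conjTranspose] using this
  have hspec : Δ = U * Matrix.diagonal (fun i => (hΔ.eigenvalues i : ℂ)) * Uᴴ := by
    have := hΔ.spectral_theorem
    simpa [Matrix.star_eq_conjTranspose, Function.comp_def] using this
  have hmaxsum : ∀ i, (if 0 < hΔ.eigenvalues i then hΔ.eigenvalues i else 0)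
      = max (hΔ.eigenvalues i) 0 := by
    intro i
    rcases lt_or_ge 0 (hΔ.eigenvalues i) with h | h
    · simp [h, le_of_lt h, max_eq_left]
    · simp [not_lt.mpr h, max_eq_right h]
  constructor
  · intro Pm hPm hIPm
    set Q := Uᴴ * Pm * U with hQdef
    have hQ : Q.PosSemidef := hPm.conjTranspose_mul_mul_same U
    have hQ' : ((1 : Matrix (Fin n) (Fin n) ℂ) - Q).PosSemidef := by
      have : (1 : Matrix (Fin n) (Fin n) ℂ) - Q = Uᴴ * (1 - Pm) * U := by
        rw [Matrix.mul_sub, Matrix.sub_mul, Matrix.mul_one, hUU, hQdef]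
      rw [this]
      exact hIPm.conjTranspose_mul_mul_same U
    have htr : (Pm * Δ).trace = ∑ i, Q i i * (hΔ.eigenvalues i : ℂ) := by
      conv_lhs => rw [hspec]
      rw [← Matrix.mul_assoc, Matrix.trace_mul_cycle, ← Matrix.mul_assoc, ← hQdef]
      simp [Matrix.trace, Matrix.diag, Matrix.mul_apply, Matrix.diagonal,
        Finset.sum_ite_eq, mul_comm]
    rw [htr, Complex.re_sum]
    apply Finset.sum_le_sum
    intro i _
    have hre : (Q i i * (hΔ.eigenvalues i : ℂ)).re = (Q i i).re * hΔ.eigenvalues i := by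
      simp [Complex.mul_re]
    rw [hre]
    have h0 : 0 ≤ (Q i i).re := psd_diag_re_nonneg hQ i
    have h1 : (Q i i).re ≤ 1 := by
      have := psd_diag_re_nonneg hQ' i
      simp only [Matrix.sub_apply, Matrix.one_apply_eq, Complex.sub_re, Complex.one_re] at this
      linarith
    rcases le_or_gt 0 (hΔ.eigenvalues i) with h | h
    · calc (Q i i).re * hΔ.eigenvalues i ≤ 1 * hΔ.eigenvalues i :=
            mul_le_mul_of_nonneg_right h1 h
        _ = hΔ.eigenvalues i := one_mul _
        _ ≤ max (hΔ.eigenvalues i) 0 := le_max_left _ _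
    · calc (Q i i).re * hΔ.eigenvalues i ≤ 0 := mul_nonpos_of_nonneg_of_nonpos h0 h.le
        _ ≤ max (hΔ.eigenvalues i) 0 := le_max_right _ _
  · intro Ppos hP
    set f : Fin n → ℂ := fun i => if 0 < hΔ.eigenvalues i then (1 : ℂ) else 0 with hf
    have hf01 : ∀ i, 0 ≤ f i := by
      intro i; rw [hf]; dsimp only; split <;> norm_num
    have hf1 : ∀ i, 0 ≤ 1 - f i := by
      intro i; rw [hf]; dsimp only; split <;> norm_num
    refine ⟨?_, ?_, ?_⟩
    · rw [hP]
      exact (Matrix.PosSemidef.diagonal hf01).mul_mul_conjTranspose_same U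
    · have heq : (1 : Matrix (Fin n) (Fin n) ℂ) - Ppos
          = U * Matrix.diagonal (fun i => 1 - f i) * Uᴴ := by
        rw [hP]
        have : Matrix.diagonal (fun i => 1 - f i)
            = 1 - Matrix.diagonal f := by
          rw [← Matrix.diagonal_one, Matrix.diagonal_sub]
        rw [this, Matrix.mul_sub, Matrix.sub_mul, Matrix.mul_one, hUU']
      rw [heq]
      exact (Matrix.PosSemidef.diagonal hf1).mul_mul_conjTranspose_same U
    · have htr : (Ppos * Δ).trace = ∑ i, f i * (hΔ.eigenvalues i : ℂ) := by
        rw [hP]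
        conv_lhs => rw [hspec]
        have : U * Matrix.diagonal f * Uᴴ * (U * Matrix.diagonal (fun i => (hΔ.eigenvalues i : ℂ)) * Uᴴ)
            = U * (Matrix.diagonal f * Matrix.diagonal (fun i => (hΔ.eigenvalues i : ℂ))) * Uᴴ := by
          simp only [Matrix.mul_assoc]
          rw [← Matrix.mul_assoc Uᴴ U, hUU, Matrix.one_mul]
        rw [this, Matrix.trace_mul_cycle, ← Matrix.mul_assoc, hUU, Matrix.one_mul,
          Matrix.diagonal_mul_diagonal, Matrix.trace_diagonal]
      rw [htr, Complex.re_sum]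
      apply Finset.sum_congr rfl
      intro i _
      rw [← hmaxsum i, hf]
      dsimp only
      split <;> simp
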